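/- If a + b > c + q + 2, then (a−1)(a+b−c−q−2)·₃F₂(1,c,q; a−1,b; 1) − (a−q−1)(a−c−1)·₃F₂(1,c,q; a,b; 1) = (a−1)(b−1). -/

import Mathlib

noncomputable def poch (a : ℝ) (n : ℕ) : ℝ := (ascPochhammer ℝ n).eval a

/-- Generalized hypergeometric series ₃F₂(a,b,c; d,e; x). -/
noncomputable def F32 (a b c d e x : ℝ) : ℝ :=
  ∑' n : ℕ, (poch a n * poch b n * poch c n) / (poch d n * poch e n * (n.factorial : ℝ)) * x ^ n

/-- `x` is not a non-positive integer. -/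
def NotNonposInt (x : ℝ) : Prop := ∀ m : ℕ, x ≠ -(m : ℝ)

lemma poch_zero (x : ℝ) : poch x 0 = 1 := by simp [poch]

lemma poch_succ (x : ℝ) (n : ℕ) : poch x (n + 1) = poch x n * (x + n) := by
  simp [poch, ascPochhammer_succ_eval]

lemma poch_one_eq (n : ℕ) : poch 1 n = (n.factorial : ℝ) := by
  simp [poch]

lemma poch_ne_zero {x : ℝ} (hx : NotNonposInt x) (n : ℕ) : poch x n ≠ 0 := by
  intro h
  rw [poch, ascPochhammer_eval_eq_zero_iff] at h
  obtain ⟨k, _, hk⟩ := h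
  exact hx k (by linarith [hk.symm] )

/-- The simplified term of `F32 1 c q a b 1`. -/
noncomputable def Tt (c q a b : ℝ) (n : ℕ) : ℝ :=
  poch c n * poch q n / (poch a n * poch b n)

lemma F32_eq (c q a b : ℝ) : F32 1 c q a b 1 = ∑' n : ℕ, Tt c q a b n := by
  unfold F32 Tt
  congr 1
  funext n
  have hfac : (n.factorial : ℝ) ≠ 0 := Nat.cast_ne_zero.mpr n.factorial_ne_zero
  rw [poch_one_eq, one_pow, mul_one,
    show (poch a n * poch b n * (n.factorial : ℝ)) = (n.factorial : ℝ) * (poch a n * poch b n) by ring,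
    show ((n.factorial : ℝ) * poch c n * poch q n) = (n.factorial : ℝ) * (poch c n * poch q n) by ring,
    mul_div_mul_left _ _ hfac]

lemma Tt_succ (c q a b : ℝ) (n : ℕ) (ha : poch a n * (a + n) ≠ 0) (hb : poch b n * (b + n) ≠ 0) :
    Tt c q a b (n + 1) = Tt c q a b n * ((c + n) * (q + n) / ((a + n) * (b + n))) := by
  have ha' : poch a n ≠ 0 := fun h => ha (by simp [h])
  have hb' : poch b n ≠ 0 := fun h => hb (by simp [h])
  have ha2 : (a + (n:ℝ)) ≠ 0 := fun h => ha (by simp [h])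
  have hb2 : (b + (n:ℝ)) ≠ 0 := fun h => hb (by simp [h])
  unfold Tt
  rw [poch_succ, poch_succ, poch_succ, poch_succ]
  field_simp

/-- relation between `poch (a-1)` and `poch a`. -/
lemma poch_shift (a : ℝ) (n : ℕ) : poch (a - 1) n * (a - 1 + n) = (a - 1) * poch a n := by
  have h1 : poch (a - 1) (n + 1) = poch (a - 1) n * (a - 1 + n) := poch_succ _ _
  have h2 : poch (a - 1) (n + 1) = (a - 1) * poch a n := by
    unfold poch
    rw [ascPochhammer_succ_left, Polynomial.eval_mul, Polynomial.eval_X,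
      Polynomial.eval_comp, Polynomial.eval_add, Polynomial.eval_X, Polynomial.eval_one]
    ring_nf
  rw [← h1, h2]

lemma NotNonposInt.add_ne {x : ℝ} (hx : NotNonposInt x) (n : ℕ) : x + (n : ℝ) ≠ 0 := by
  intro h
  exact hx n (by linarith)

lemma Tt_shift (c q a b : ℝ) (n : ℕ) (hpa : poch a n ≠ 0) (hpa' : poch (a - 1) n ≠ 0)
    (hpb : poch b n ≠ 0) :
    Tt c q (a - 1) b n * (a - 1) = Tt c q a b n * (a - 1 + n) := by
  unfold Tt
  rw [div_mul_eq_mul_div, div_mul_eq_mul_div,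
    div_eq_div_iff (mul_ne_zero hpa' hpb) (mul_ne_zero hpa hpb)]
  linear_combination (-(poch c n * poch q n * poch b n)) * poch_shift a n

lemma telescope (a b c q : ℝ) (ha1 : NotNonposInt (a - 1)) (ha : NotNonposInt a)
    (hb : NotNonposInt b) (N : ℕ) :
    (a - 1) * (a + b - c - q - 2) * (∑ n ∈ Finset.range N, Tt c q (a - 1) b n)
      - (a - q - 1) * (a - c - 1) * (∑ n ∈ Finset.range N, Tt c q a b n)
      = (a - 1) * (b - 1) - (a + N - 1) * (b + N - 1) * Tt c q a b N := by
  induction N with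
  | zero => simp [Tt, poch_zero]
  | succ N ih =>
    have ha1' : a - 1 ≠ 0 := by
      have := ha1 0; simpa using this
    have haN : (a : ℝ) + N ≠ 0 := ha.add_ne N
    have hbN : (b : ℝ) + N ≠ 0 := hb.add_ne N
    have ha1N : (a - 1) + (N : ℝ) ≠ 0 := ha1.add_ne N
    have hpa : poch a N ≠ 0 := poch_ne_zero ha N
    have hpa' : poch (a - 1) N ≠ 0 := poch_ne_zero ha1 N
    have hpb : poch b N ≠ 0 := poch_ne_zero hb N
    have h1 : Tt c q a b (N + 1) = Tt c q a b N * ((c + N) * (q + N) / ((a + N) * (b + N))) :=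
      Tt_succ c q a b N (mul_ne_zero hpa haN) (mul_ne_zero hpb hbN)
    have h2 : Tt c q (a - 1) b N = Tt c q a b N * (a - 1 + N) / (a - 1) := by
      rw [eq_div_iff ha1', Tt_shift c q a b N hpa hpa' hpb]
    have step : (a - 1) * (a + b - c - q - 2) * Tt c q (a - 1) b N
        - (a - q - 1) * (a - c - 1) * Tt c q a b N
        = (a + N - 1) * (b + N - 1) * Tt c q a b N
          - (a + (N:ℝ) + 1 - 1) * (b + (N:ℝ) + 1 - 1) * Tt c q a b (N + 1) := by
      rw [h1, h2]
      field_simp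
      ring
    rw [Finset.sum_range_succ, Finset.sum_range_succ]
    push_cast
    linarith [ih, step]

lemma Tt_bound (c q a b ε : ℝ) (ha : NotNonposInt a) (hb : NotNonposInt b)
    (hε : 0 < ε) (hs : 2 * ε ≤ a + b - c - q - 1) :
    ∃ N₀ : ℕ, 0 < N₀ ∧ ∃ C : ℝ, 0 ≤ C ∧
      ∀ n : ℕ, N₀ ≤ n → |Tt c q a b n| ≤ C * (n : ℝ) ^ (-(1 + ε)) := by
  set β : ℝ := a * b - ε * (a + b) - (c * q + c + q) with hβ
  set γ : ℝ := -(ε * (a * b)) - c * q with hγ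
  set B : ℝ := max ((|β| + |γ| + 1) / ε + 1) (|a| + |b| + |c| + |q| + 2) with hB
  obtain ⟨N₀, hN₀⟩ := exists_nat_ge B
  have hB2 : |a| + |b| + |c| + |q| + 2 ≤ B := le_max_right _ _
  have hN₀pos : 0 < N₀ := by
    by_contra hcon
    have : N₀ = 0 := by omega
    rw [this] at hN₀
    simp only [Nat.cast_zero] at hN₀
    nlinarith [abs_nonneg a, abs_nonneg b, abs_nonneg c, abs_nonneg q]
  -- basic facts for n ≥ N₀
  have hfacts : ∀ n : ℕ, N₀ ≤ n → 1 ≤ c + n ∧ 1 ≤ q + n ∧ 1 ≤ a + n ∧ 1 ≤ b + n ∧ 1 ≤ (n:ℝ) := by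
    intro n hn
    have hn' : (N₀ : ℝ) ≤ n := Nat.cast_le.mpr hn
    have hBn : B ≤ (n : ℝ) := le_trans hN₀ hn'
    have h1 := neg_abs_le a
    have h2 := neg_abs_le b
    have h3 := neg_abs_le c
    have h4 := neg_abs_le q
    have h5 := abs_nonneg a
    have h6 := abs_nonneg b
    have h7 := abs_nonneg c
    have h8 := abs_nonneg q
    refine ⟨by linarith, by linarith, by linarith, by linarith, by linarith⟩
  -- the key ratio inequality
  have key : ∀ n : ℕ, N₀ ≤ n →
      (c + n) * (q + n) * ((n:ℝ) + 1) ≤ (a + n) * (b + n) * ((n:ℝ) - ε) := by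
    intro n hn
    have hn' : (N₀ : ℝ) ≤ n := Nat.cast_le.mpr hn
    have hBn : B ≤ (n : ℝ) := le_trans hN₀ hn'
    have hB1 : (|β| + |γ| + 1) / ε + 1 ≤ B := le_max_left _ _
    have hx1 : (1 : ℝ) ≤ (n : ℝ) := (hfacts n hn).2.2.2.2
    have hεx : |β| + |γ| + 1 ≤ ε * ((n:ℝ) - 1) := by
      have h0 : (|β| + |γ| + 1) / ε ≤ (n:ℝ) - 1 := by linarith [le_trans hB1 hBn]
      calc |β| + |γ| + 1 = (|β| + |γ| + 1) / ε * ε := by field_simp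
        _ ≤ ((n:ℝ) - 1) * ε := mul_le_mul_of_nonneg_right h0 hε.le
        _ = ε * ((n:ℝ) - 1) := mul_comm _ _
    have hquad : 0 ≤ ε * (n:ℝ) ^ 2 + β * (n:ℝ) + γ := by
      have h1 := le_abs_self β
      have h2 := neg_abs_le β
      have h3 := le_abs_self γ
      have h4 := neg_abs_le γ
      nlinarith [sq_nonneg ((n:ℝ) - 1)]
    have expand : (a + (n:ℝ)) * (b + n) * ((n:ℝ) - ε) - (c + n) * (q + n) * ((n:ℝ) + 1)
        = (a + b - c - q - 1 - ε) * (n:ℝ) ^ 2 + β * (n:ℝ) + γ := by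
      rw [hβ, hγ]; ring
    nlinarith [sq_nonneg (n:ℝ)]
  -- ratio bound
  set p : ℝ := 1 + ε with hp
  have hp1 : (1:ℝ) ≤ p := by simp [hp]; linarith
  set C : ℝ := |Tt c q a b N₀| * (N₀ : ℝ) ^ p with hC
  have hN₀r : (0:ℝ) < (N₀ : ℝ) := by exact_mod_cast hN₀pos
  have hCpos : 0 ≤ C := mul_nonneg (abs_nonneg _) (Real.rpow_nonneg hN₀r.le _)
  refine ⟨N₀, hN₀pos, C, hCpos, ?_⟩
  intro n hn
  induction n, hn using Nat.le_induction with
  | base =>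
    rw [hC, mul_assoc, ← Real.rpow_add hN₀r, add_neg_cancel, Real.rpow_zero, mul_one]
  | succ n hn ih =>
    obtain ⟨hc1, hq1, ha1, hb1, hn1⟩ := hfacts n hn
    have hnpos : (0:ℝ) < (n:ℝ) := by linarith
    have hρ0 : 0 ≤ (c + (n:ℝ)) * (q + n) / ((a + n) * (b + n)) := by positivity
    have hTsucc : Tt c q a b (n + 1)
        = Tt c q a b n * ((c + n) * (q + n) / ((a + n) * (b + n))) :=
      Tt_succ c q a b n (mul_ne_zero (poch_ne_zero ha n) (ha.add_ne n))
        (mul_ne_zero (poch_ne_zero hb n) (hb.add_ne n))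
    have hρle : (c + (n:ℝ)) * (q + n) / ((a + n) * (b + n)) ≤ ((n:ℝ) / ((n:ℝ) + 1)) ^ p := by
      have hab : (0:ℝ) < (a + n) * (b + n) := by nlinarith
      have h1 : (c + (n:ℝ)) * (q + n) / ((a + n) * (b + n)) ≤ ((n:ℝ) - ε) / ((n:ℝ) + 1) := by
        rw [div_le_div_iff₀ hab (by linarith), mul_comm ((n:ℝ) - ε) ((a + (n:ℝ)) * (b + (n:ℝ)))]
        exact key n hn
      have h2 : ((n:ℝ) - ε) / ((n:ℝ) + 1) ≤ ((n:ℝ) / ((n:ℝ) + 1)) ^ p := by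
        have hs' : (-1:ℝ) ≤ -(1 / ((n:ℝ) + 1)) := by
          rw [neg_le_neg_iff]
          rw [div_le_one (by linarith)]
          linarith
        have hbern := one_add_mul_self_le_rpow_one_add hs' (by linarith : (1:ℝ) ≤ 1 + ε)
        have heq : (1:ℝ) + -(1 / ((n:ℝ) + 1)) = (n:ℝ) / ((n:ℝ) + 1) := by
          field_simp
          ring
        have heq2 : ((n:ℝ) - ε) / ((n:ℝ) + 1) = 1 + (1 + ε) * (-(1 / ((n:ℝ) + 1))) := by
          field_simp
          ring
        rw [heq2, hp, ← heq]
        exact hbern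
      linarith
    have habs : |Tt c q a b (n + 1)|
        = |Tt c q a b n| * ((c + (n:ℝ)) * (q + n) / ((a + n) * (b + n))) := by
      rw [hTsucc, abs_mul, abs_of_nonneg hρ0]
    have hmono : |Tt c q a b n| * ((c + (n:ℝ)) * (q + n) / ((a + n) * (b + n)))
        ≤ (C * (n:ℝ) ^ (-p)) * (((n:ℝ)) / ((n:ℝ) + 1)) ^ p := by
      apply mul_le_mul ih hρle hρ0
      positivity
    have hrw : (C * (n:ℝ) ^ (-p)) * (((n:ℝ)) / ((n:ℝ) + 1)) ^ p = C * ((n:ℝ) + 1) ^ (-p) := by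
      rw [Real.div_rpow hnpos.le (by linarith), Real.rpow_neg hnpos.le, Real.rpow_neg (by linarith)]
      have hpn : (0:ℝ) < (n:ℝ) ^ p := Real.rpow_pos_of_pos hnpos p
      field_simp
    rw [habs]
    push_cast
    calc |Tt c q a b n| * ((c + (n:ℝ)) * (q + n) / ((a + n) * (b + n)))
        ≤ (C * (n:ℝ) ^ (-p)) * (((n:ℝ)) / ((n:ℝ) + 1)) ^ p := hmono
      _ = C * ((n:ℝ) + 1) ^ (-p) := hrw

lemma summable_Tt (c q a b : ℝ) (ha : NotNonposInt a) (hb : NotNonposInt b)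
    (h : c + q + 1 < a + b) : Summable (Tt c q a b) := by
  set ε : ℝ := (a + b - c - q - 1) / 2 with hε
  have hε0 : 0 < ε := by rw [hε]; linarith
  obtain ⟨N₀, hN₀pos, C, hC0, hbound⟩ :=
    Tt_bound c q a b ε ha hb hε0 (by rw [hε]; linarith)
  rw [← summable_abs_iff, ← summable_nat_add_iff N₀]
  have hg : Summable (fun n : ℕ => C * ((n + N₀ : ℕ) : ℝ) ^ (-(1 + ε))) := by
    exact (summable_nat_add_iff (f := fun n : ℕ => C * (n:ℝ) ^ (-(1 + ε))) N₀).mpr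
      ((Real.summable_nat_rpow.mpr (by linarith)).mul_left C)
  exact Summable.of_nonneg_of_le (fun n => abs_nonneg _)
    (fun n => hbound (n + N₀) (Nat.le_add_left _ _)) hg

/-- If `a + b > c + q + 2`, then
`(a−1)(a+b−c−q−2)·₃F₂(1,c,q;a−1,b;1) − (a−q−1)(a−c−1)·₃F₂(1,c,q;a,b;1) = (a−1)(b−1)`. -/
theorem stmt4 (a b c q : ℝ) (ha1 : NotNonposInt (a - 1)) (ha : NotNonposInt a)
    (hb : NotNonposInt b) (h : a + b > c + q + 2) :
    (a - 1) * (a + b - c - q - 2) * F32 1 c q (a - 1) b 1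
      - (a - q - 1) * (a - c - 1) * F32 1 c q a b 1
      = (a - 1) * (b - 1) := by
  have ha1' : a - 1 ≠ 0 := by have := ha1 0; simpa using this
  -- summability
  have hS1 : Summable (Tt c q (a - 1) b) :=
    summable_Tt c q (a - 1) b ha1 hb (by linarith)
  have hS2 : Summable (Tt c q a b) :=
    summable_Tt c q a b ha hb (by linarith)
  -- the boundary term tends to zero
  set g : ℕ → ℝ := fun N => (a + N - 1) * (b + N - 1) * Tt c q a b N with hg
  have hgzero : Filter.Tendsto g Filter.atTop (nhds 0) := by
    set ε : ℝ := (a + b - c - q - 2) / 2 with hε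
    have hε0 : 0 < ε := by rw [hε]; linarith
    obtain ⟨N₀, hN₀pos, C, hC0, hbound⟩ :=
      Tt_bound c q (a - 1) b ε ha1 hb hε0 (by rw [hε]; linarith)
    obtain ⟨N₁, hN₁⟩ := exists_nat_ge (|b| + 1)
    apply squeeze_zero_norm' (a := fun N : ℕ => (2 * |a - 1| * C) * (N : ℝ) ^ (-ε))
    · rw [Filter.eventually_atTop]
      refine ⟨max (max N₀ N₁) 1, fun N hN => ?_⟩
      have hN0 : N₀ ≤ N := le_trans (le_trans (le_max_left _ _) (le_max_left _ _)) hN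
      have hN1 : N₁ ≤ N := le_trans (le_trans (le_max_right _ _) (le_max_left _ _)) hN
      have hNpos : (0:ℝ) < (N:ℝ) := by
        have : (1:ℕ) ≤ N := le_trans (le_max_right _ _) hN
        exact_mod_cast this
      have hbN : b + (N:ℝ) - 1 ≤ 2 * N := by
        have : (N₁:ℝ) ≤ N := Nat.cast_le.mpr hN1
        have := neg_abs_le b
        have := le_abs_self b
        linarith
      have hbN0 : 0 ≤ b + (N:ℝ) - 1 := by
        have : (N₁:ℝ) ≤ N := Nat.cast_le.mpr hN1
        have := neg_abs_le b
        linarith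
      -- rewrite g via the shifted term
      have hgN : g N = (b + N - 1) * ((a - 1) * Tt c q (a - 1) b N) := by
        rw [hg]
        have := Tt_shift c q a b N (poch_ne_zero ha N) (poch_ne_zero ha1 N) (poch_ne_zero hb N)
        simp only
        nlinarith [this]
      have hTb := hbound N hN0
      have habs : ‖g N‖ = (b + N - 1) * (|a - 1| * |Tt c q (a - 1) b N|) := by
        rw [hgN, Real.norm_eq_abs, abs_mul, abs_mul, abs_of_nonneg hbN0]
      rw [habs]
      have step1 : (b + (N:ℝ) - 1) * (|a - 1| * |Tt c q (a - 1) b N|)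
          ≤ (2 * (N:ℝ)) * (|a - 1| * (C * (N:ℝ) ^ (-(1 + ε)))) := by
        apply mul_le_mul hbN _ (by positivity) (by positivity)
        exact mul_le_mul_of_nonneg_left hTb (abs_nonneg _)
      have step2 : (2 * (N:ℝ)) * (|a - 1| * (C * (N:ℝ) ^ (-(1 + ε))))
          = (2 * |a - 1| * C) * ((N:ℝ) * (N:ℝ) ^ (-(1 + ε))) := by ring
      have step3 : (N:ℝ) * (N:ℝ) ^ (-(1 + ε)) = (N:ℝ) ^ (-ε) := by
        rw [show -ε = 1 + -(1 + ε) by ring, Real.rpow_add hNpos, Real.rpow_one]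
      calc (b + (N:ℝ) - 1) * (|a - 1| * |Tt c q (a - 1) b N|)
          ≤ (2 * (N:ℝ)) * (|a - 1| * (C * (N:ℝ) ^ (-(1 + ε)))) := step1
        _ = (2 * |a - 1| * C) * ((N:ℝ) * (N:ℝ) ^ (-(1 + ε))) := step2
        _ = (2 * |a - 1| * C) * (N:ℝ) ^ (-ε) := by rw [step3]
    · have h1 : Filter.Tendsto (fun N : ℕ => ((N:ℝ)) ^ (-ε)) Filter.atTop (nhds 0) :=
        (tendsto_rpow_neg_atTop hε0).comp tendsto_natCast_atTop_atTop
      have := h1.const_mul (2 * |a - 1| * C)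
      simpa using this
  -- limits of partial sums
  have t1 := hS1.hasSum.tendsto_sum_nat
  have t2 := hS2.hasSum.tendsto_sum_nat
  have tphi : Filter.Tendsto
      (fun N : ℕ => (a - 1) * (a + b - c - q - 2) * (∑ n ∈ Finset.range N, Tt c q (a - 1) b n)
        - (a - q - 1) * (a - c - 1) * (∑ n ∈ Finset.range N, Tt c q a b n))
      Filter.atTop
      (nhds ((a - 1) * (a + b - c - q - 2) * (∑' n, Tt c q (a - 1) b n)
        - (a - q - 1) * (a - c - 1) * (∑' n, Tt c q a b n))) :=
    (t1.const_mul _).sub (t2.const_mul _)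
  have tphi2 : Filter.Tendsto
      (fun N : ℕ => (a - 1) * (a + b - c - q - 2) * (∑ n ∈ Finset.range N, Tt c q (a - 1) b n)
        - (a - q - 1) * (a - c - 1) * (∑ n ∈ Finset.range N, Tt c q a b n))
      Filter.atTop (nhds ((a - 1) * (b - 1) - 0)) := by
    have : (fun N : ℕ => (a - 1) * (a + b - c - q - 2) * (∑ n ∈ Finset.range N, Tt c q (a - 1) b n)
        - (a - q - 1) * (a - c - 1) * (∑ n ∈ Finset.range N, Tt c q a b n))
        = fun N : ℕ => (a - 1) * (b - 1) - g N := by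
      funext N
      exact telescope a b c q ha1 ha hb N
    rw [this]
    exact (tendsto_const_nhds).sub hgzero
  have heq := tendsto_nhds_unique tphi tphi2
  rw [F32_eq, F32_eq]
  rw [heq]
  ring
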